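/- (Lemma 3 of the paper.) In the CBwK setting, let b ∈ [0, min B) and let B̃ ∈ ℝ^d satisfy 0 ≤ B̃ < B − b·1 componentwise. If the problem (r,c,B',ν) is feasible for some B' < B̃, then any minimizer λ*_{B−b·1} of λ ↦ L(λ, B−b·1) over λ ∈ [0,∞)^d satisfies ‖λ*_{B−b·1}‖ ≤ ( OPT(r,c,B−b·1) − OPT(r,c,B̃) ) / min( B − b·1 − B̃ ), where ‖·‖ is the Euclidean norm. -/

import Mathlib

open MeasureTheory Finset

namespace CBwK

variable {X : Type*} [MeasurableSpace X] {A : Type*} [Fintype A] [Nonempty A] {d : ℕ}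

/-- A static policy: a measurable map `X → P(A)` with components `(π_a)_{a∈A}`. -/
def IsPolicy (π : X → A → ℝ) : Prop :=
  (∀ x a, 0 ≤ π x a) ∧ (∀ x, ∑ a, π x a = 1) ∧ (∀ a, Measurable fun x => π x a)

/-- Expected reward `E_{X∼ν}[Σ_a r(X,a) π_a(X)]` of a policy. -/
noncomputable def polReward (ν : Measure X) (r : X → A → ℝ) (π : X → A → ℝ) : ℝ :=
  ∫ x, ∑ a, r x a * π x a ∂ν

/-- Component `i` of the expected cost vector `E_{X∼ν}[Σ_a c(X,a) π_a(X)]` of a policy. -/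
noncomputable def polCost (ν : Measure X) (c : X → A → Fin d → ℝ) (π : X → A → ℝ)
    (i : Fin d) : ℝ :=
  ∫ x, ∑ a, c x a i * π x a ∂ν

/-- The problem `(r,c,B',ν)` is feasible. -/
def Feasible (ν : Measure X) (c : X → A → Fin d → ℝ) (B' : Fin d → ℝ) : Prop :=
  ∃ π, IsPolicy π ∧ ∀ i, polCost ν c π i ≤ B' i

/-- `OPT(r,c,B')`: optimal expected reward under the expected-cost constraints `B'`. -/
noncomputable def OPT (ν : Measure X) (r : X → A → ℝ) (c : X → A → Fin d → ℝ)
    (B' : Fin d → ℝ) : ℝ :=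
  sSup {y : ℝ | ∃ π, IsPolicy π ∧ (∀ i, polCost ν c π i ≤ B' i) ∧ y = polReward ν r π}

/-- `L(λ,C) = E_{X∼ν}[ max_a { r(X,a) − ⟨c(X,a) − C, λ⟩ } ]`. -/
noncomputable def L (ν : Measure X) (r : X → A → ℝ) (c : X → A → Fin d → ℝ)
    (lam : Fin d → ℝ) (C : Fin d → ℝ) : ℝ :=
  ∫ x, Finset.univ.sup' Finset.univ_nonempty
    (fun a => r x a - ∑ i, (c x a i - C i) * lam i) ∂ν

/-- Euclidean norm on `ℝ^d`. -/
noncomputable def enorm (v : Fin d → ℝ) : ℝ := Real.sqrt (∑ i, (v i) ^ 2)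

/-- ℓ1-norm on `ℝ^d`. -/
noncomputable def l1norm (v : Fin d → ℝ) : ℝ := ∑ i, |v i|

/-- Smallest component of a vector of `ℝ^d` (junk value `0` if `d = 0`). -/
noncomputable def minComp (v : Fin d → ℝ) : ℝ := ⨅ i, v i


set_option linter.unusedSectionVars false
set_option linter.unusedVariables false
set_option maxHeartbeats 1000000

lemma integrable_of_bdd (ν : Measure X) [IsProbabilityMeasure ν] {f : X → ℝ}
    (hm : Measurable f) (M : ℝ) (hM : ∀ x, |f x| ≤ M) : Integrable f ν :=
  (integrable_const M).mono' hm.aestronglyMeasurable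
    (Filter.Eventually.of_forall fun x => by simpa [Real.norm_eq_abs] using hM x)

lemma IsPolicy.le_one {π : X → A → ℝ} (hπ : IsPolicy π) (x : X) (a : A) : π x a ≤ 1 := by
  have h := Finset.single_le_sum (f := fun b => π x b) (fun b _ => hπ.1 x b) (Finset.mem_univ a)
  rw [hπ.2.1 x] at h; exact h

lemma sum_mul_abs_le {π : X → A → ℝ} (hπ : IsPolicy π) {h : X → A → ℝ} {K : ℝ}
    (hb : ∀ x a, |h x a| ≤ K) (hK : 0 ≤ K) (x : X) : |∑ a, h x a * π x a| ≤ K := by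
  calc |∑ a, h x a * π x a| ≤ ∑ a, |h x a * π x a| := Finset.abs_sum_le_sum_abs _ _
    _ ≤ ∑ a, K * π x a := Finset.sum_le_sum fun a _ => by
        rw [abs_mul, abs_of_nonneg (hπ.1 x a)]
        exact mul_le_mul_of_nonneg_right (hb x a) (hπ.1 x a)
    _ = K := by rw [← Finset.mul_sum, hπ.2.1 x, mul_one]

lemma measurable_sum_mul {π : X → A → ℝ} {h : X → A → ℝ}
    (hm : ∀ a, Measurable fun x => h x a) (hπ : IsPolicy π) :
    Measurable fun x => ∑ a, h x a * π x a :=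
  Finset.measurable_sum _ fun a _ => (hm a).mul (hπ.2.2 a)

lemma integrable_sum_mul (ν : Measure X) [IsProbabilityMeasure ν] {π : X → A → ℝ}
    {h : X → A → ℝ} {K : ℝ} (hm : ∀ a, Measurable fun x => h x a)
    (hb : ∀ x a, |h x a| ≤ K) (hK : 0 ≤ K) (hπ : IsPolicy π) :
    Integrable (fun x => ∑ a, h x a * π x a) ν :=
  integrable_of_bdd ν (measurable_sum_mul hm hπ) K (sum_mul_abs_le hπ hb hK)

lemma IsPolicy.mix {π₁ π₂ : X → A → ℝ} (h₁ : IsPolicy π₁) (h₂ : IsPolicy π₂) {s t : ℝ}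
    (hs : 0 ≤ s) (ht : 0 ≤ t) (hst : s + t = 1) :
    IsPolicy (fun x a => s * π₁ x a + t * π₂ x a) :=
  ⟨fun x a => add_nonneg (mul_nonneg hs (h₁.1 x a)) (mul_nonneg ht (h₂.1 x a)),
   fun x => by
     rw [Finset.sum_add_distrib, ← Finset.mul_sum, ← Finset.mul_sum, h₁.2.1, h₂.2.1,
       mul_one, mul_one, hst],
   fun a => ((h₁.2.2 a).const_mul s).add ((h₂.2.2 a).const_mul t)⟩

lemma integral_sum_mul_mix (ν : Measure X) [IsProbabilityMeasure ν] {h : X → A → ℝ}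
    (hm : ∀ a, Measurable fun x => h x a) (hb : ∀ x a, |h x a| ≤ 1)
    {π₁ π₂ : X → A → ℝ} (h₁ : IsPolicy π₁) (h₂ : IsPolicy π₂) (s t : ℝ) :
    ∫ x, ∑ a, h x a * (s * π₁ x a + t * π₂ x a) ∂ν
      = s * ∫ x, ∑ a, h x a * π₁ x a ∂ν + t * ∫ x, ∑ a, h x a * π₂ x a ∂ν := by
  have e : (fun x => ∑ a, h x a * (s * π₁ x a + t * π₂ x a))
      = fun x => s * (∑ a, h x a * π₁ x a) + t * (∑ a, h x a * π₂ x a) := by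
    funext x
    rw [Finset.mul_sum, Finset.mul_sum, ← Finset.sum_add_distrib]
    exact Finset.sum_congr rfl fun a _ => by ring
  rw [e, integral_add ((integrable_sum_mul ν hm hb zero_le_one h₁).const_mul s)
      ((integrable_sum_mul ν hm hb zero_le_one h₂).const_mul t),
    integral_const_mul, integral_const_mul]

section Main
variable (ν : Measure X) [IsProbabilityMeasure ν]
variable {r : X → A → ℝ} {c : X → A → Fin d → ℝ}

lemma lagrangian_eq (hr : ∀ x a, r x a ∈ Set.Icc (0:ℝ) 1)
    (hc : ∀ x a i, c x a i ∈ Set.Icc (-1:ℝ) 1)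
    (hrm : ∀ a, Measurable fun x => r x a) (hcm : ∀ a i, Measurable fun x => c x a i)
    (lam C : Fin d → ℝ) {π : X → A → ℝ} (hπ : IsPolicy π) :
    ∫ x, ∑ a, (r x a - ∑ i, (c x a i - C i) * lam i) * π x a ∂ν
      = polReward ν r π - ∑ i, (polCost ν c π i - C i) * lam i := by
  have hrb : ∀ x a, |r x a| ≤ 1 := fun x a => abs_le.2 ⟨by linarith [(hr x a).1], (hr x a).2⟩
  have hcb : ∀ i x a, |c x a i| ≤ 1 := fun i x a => abs_le.2 ⟨(hc x a i).1, (hc x a i).2⟩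
  have key : ∀ x, ∑ a, (r x a - ∑ i, (c x a i - C i) * lam i) * π x a
      = (∑ a, r x a * π x a) + ∑ i, lam i * (C i - ∑ a, c x a i * π x a) := by
    intro x
    have hs := hπ.2.1 x
    have hper : ∀ i : Fin d, ∑ a, ((c x a i - C i) * lam i) * π x a
        = lam i * (∑ a, c x a i * π x a) - lam i * C i := by
      intro i
      have h1 : ∑ a, ((c x a i - C i) * lam i) * π x a
          = (∑ a, lam i * (c x a i * π x a)) - ∑ a, (lam i * C i) * π x a := by
        rw [← Finset.sum_sub_distrib]
        exact Finset.sum_congr rfl fun a _ => by ring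
      rw [h1, ← Finset.mul_sum, ← Finset.mul_sum, hs, mul_one]
    calc ∑ a, (r x a - ∑ i, (c x a i - C i) * lam i) * π x a
        = ∑ a, (r x a * π x a - ∑ i, ((c x a i - C i) * lam i) * π x a) := by
          refine Finset.sum_congr rfl fun a _ => ?_
          rw [sub_mul, Finset.sum_mul]
      _ = (∑ a, r x a * π x a) - ∑ a, ∑ i, ((c x a i - C i) * lam i) * π x a :=
          Finset.sum_sub_distrib _ _
      _ = (∑ a, r x a * π x a) - ∑ i, ∑ a, ((c x a i - C i) * lam i) * π x a := by
          rw [Finset.sum_comm]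
      _ = (∑ a, r x a * π x a) + ∑ i, lam i * (C i - ∑ a, c x a i * π x a) := by
          rw [Finset.sum_congr rfl fun i _ => hper i, sub_eq_add_neg, ← Finset.sum_neg_distrib]
          congr 1
          exact Finset.sum_congr rfl fun i _ => by ring
  have hint_r : Integrable (fun x => ∑ a, r x a * π x a) ν :=
    integrable_sum_mul ν hrm hrb zero_le_one hπ
  have hint_c : ∀ i, Integrable (fun x => ∑ a, c x a i * π x a) ν :=
    fun i => integrable_sum_mul ν (fun a => hcm a i) (hcb i) zero_le_one hπ
  have hint_gi : ∀ i : Fin d, Integrable (fun x => lam i * (C i - ∑ a, c x a i * π x a)) ν :=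
    fun i => ((integrable_const (C i)).sub (hint_c i)).const_mul (lam i)
  have hint_g : Integrable (fun x => ∑ i, lam i * (C i - ∑ a, c x a i * π x a)) ν :=
    integrable_finset_sum _ fun i _ => hint_gi i
  have hper2 : ∀ i : Fin d, ∫ x, lam i * (C i - ∑ a, c x a i * π x a) ∂ν
      = lam i * (C i - polCost ν c π i) := by
    intro i
    rw [integral_const_mul, integral_sub (integrable_const _) (hint_c i), integral_const]
    simp [polCost]
  have hG : ∫ x, ∑ i, lam i * (C i - ∑ a, c x a i * π x a) ∂ν
      = ∑ i, lam i * (C i - polCost ν c π i) := by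
    rw [integral_finset_sum _ fun i _ => hint_gi i]
    exact Finset.sum_congr rfl fun i _ => hper2 i
  have hneg : ∑ i, lam i * (C i - polCost ν c π i)
      = - ∑ i, (polCost ν c π i - C i) * lam i := by
    rw [← Finset.sum_neg_distrib]
    exact Finset.sum_congr rfl fun i _ => by ring
  rw [show (fun x => ∑ a, (r x a - ∑ i, (c x a i - C i) * lam i) * π x a)
      = fun x => (∑ a, r x a * π x a) + ∑ i, lam i * (C i - ∑ a, c x a i * π x a)
      from funext key]
  rw [integral_add hint_r hint_g, hG, hneg, polReward]
  ring

lemma measurable_sup'_aux {g : A → X → ℝ} (hg : ∀ a, Measurable (g a))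
    {s : Finset A} (hs : s.Nonempty) :
    Measurable fun x => s.sup' hs (fun a => g a x) := by
  induction hs using Finset.Nonempty.cons_induction with
  | singleton a => simpa using hg a
  | cons a s ha hs ih =>
    have e : (fun x => (Finset.cons a s ha).sup' (Finset.cons_nonempty ha) (fun b => g b x))
        = fun x => g a x ⊔ s.sup' hs (fun b => g b x) := by
      funext x; exact Finset.sup'_cons hs _
    rw [e]
    exact (hg a).sup ih

lemma abs_sup'_le {g : A → X → ℝ} {K : ℝ} (hb : ∀ a x, |g a x| ≤ K) (x : X) :
    |Finset.univ.sup' Finset.univ_nonempty (fun a => g a x)| ≤ K := by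
  rw [abs_le]
  obtain ⟨a⟩ := ‹Nonempty A›
  constructor
  · exact le_trans (abs_le.1 (hb a x)).1 (Finset.le_sup' (fun b => g b x) (Finset.mem_univ a))
  · exact Finset.sup'_le _ _ fun b _ => (abs_le.1 (hb b x)).2

lemma lagrangian_le_L (hr : ∀ x a, r x a ∈ Set.Icc (0:ℝ) 1)
    (hc : ∀ x a i, c x a i ∈ Set.Icc (-1:ℝ) 1)
    (hrm : ∀ a, Measurable fun x => r x a) (hcm : ∀ a i, Measurable fun x => c x a i)
    (lam C : Fin d → ℝ) {π : X → A → ℝ} (hπ : IsPolicy π) :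
    polReward ν r π - ∑ i, (polCost ν c π i - C i) * lam i ≤ L ν r c lam C := by
  set K : ℝ := 1 + ∑ i, (1 + |C i|) * |lam i| with hK
  have hK0 : 0 ≤ K := by
    have : (0:ℝ) ≤ ∑ i, (1 + |C i|) * |lam i| :=
      Finset.sum_nonneg fun i _ =>
        mul_nonneg (by positivity) (abs_nonneg _)
    linarith
  have hgb : ∀ a x, |r x a - ∑ i, (c x a i - C i) * lam i| ≤ K := by
    intro a x
    calc |r x a - ∑ i, (c x a i - C i) * lam i|
        ≤ |r x a| + |∑ i, (c x a i - C i) * lam i| := abs_sub _ _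
      _ ≤ 1 + ∑ i, (1 + |C i|) * |lam i| := by
          gcongr
          · exact abs_le.2 ⟨by linarith [(hr x a).1], (hr x a).2⟩
          · calc |∑ i, (c x a i - C i) * lam i| ≤ ∑ i, |(c x a i - C i) * lam i| :=
                Finset.abs_sum_le_sum_abs _ _
              _ ≤ ∑ i, (1 + |C i|) * |lam i| := by
                  refine Finset.sum_le_sum fun i _ => ?_
                  rw [abs_mul]
                  refine mul_le_mul_of_nonneg_right ?_ (abs_nonneg _)
                  calc |c x a i - C i| ≤ |c x a i| + |C i| := abs_sub _ _
                    _ ≤ 1 + |C i| := by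
                        have := abs_le.2 ⟨(hc x a i).1, (hc x a i).2⟩
                        linarith
  have hgm : ∀ a, Measurable fun x => r x a - ∑ i, (c x a i - C i) * lam i := fun a =>
    (hrm a).sub (Finset.measurable_sum _ fun i _ =>
      ((hcm a i).sub measurable_const).mul measurable_const)
  have hsupm : Measurable fun x => Finset.univ.sup' Finset.univ_nonempty
      (fun a => r x a - ∑ i, (c x a i - C i) * lam i) :=
    measurable_sup'_aux hgm Finset.univ_nonempty
  have hint_sup : Integrable (fun x => Finset.univ.sup' Finset.univ_nonempty
      (fun a => r x a - ∑ i, (c x a i - C i) * lam i)) ν :=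
    integrable_of_bdd ν hsupm K (abs_sup'_le hgb)
  have hint_lag : Integrable
      (fun x => ∑ a, (r x a - ∑ i, (c x a i - C i) * lam i) * π x a) ν :=
    integrable_sum_mul ν hgm (fun x a => hgb a x) hK0 hπ
  rw [← lagrangian_eq ν hr hc hrm hcm lam C hπ, L]
  refine integral_mono hint_lag hint_sup fun x => ?_
  calc ∑ a, (r x a - ∑ i, (c x a i - C i) * lam i) * π x a
      ≤ ∑ a, (Finset.univ.sup' Finset.univ_nonempty
          (fun a => r x a - ∑ i, (c x a i - C i) * lam i)) * π x a := by
        refine Finset.sum_le_sum fun a _ => ?_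
        exact mul_le_mul_of_nonneg_right (Finset.le_sup' (fun b => r x b - ∑ i, (c x b i - C i) * lam i) (Finset.mem_univ a)) (hπ.1 x a)
    _ = Finset.univ.sup' Finset.univ_nonempty
          (fun a => r x a - ∑ i, (c x a i - C i) * lam i) := by
        rw [← Finset.mul_sum, hπ.2.1 x, mul_one]


lemma exists_policy_L_eq (hr : ∀ x a, r x a ∈ Set.Icc (0:ℝ) 1)
    (hc : ∀ x a i, c x a i ∈ Set.Icc (-1:ℝ) 1)
    (hrm : ∀ a, Measurable fun x => r x a) (hcm : ∀ a i, Measurable fun x => c x a i)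
    (lam C : Fin d → ℝ) :
    ∃ π, IsPolicy π ∧
      L ν r c lam C = polReward ν r π - ∑ i, (polCost ν c π i - C i) * lam i := by
  classical
  set g : A → X → ℝ := fun a x => r x a - ∑ i, (c x a i - C i) * lam i with hgdef
  have hgm : ∀ a, Measurable (g a) := fun a =>
    (hrm a).sub (Finset.measurable_sum _ fun i _ =>
      ((hcm a i).sub measurable_const).mul measurable_const)
  set M : X → ℝ := fun x => Finset.univ.sup' Finset.univ_nonempty (fun a => g a x) with hMdef
  have hMm : Measurable M := measurable_sup'_aux hgm Finset.univ_nonempty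
  set e : A ≃ Fin (Fintype.card A) := Fintype.equivFin A with hedef
  have hne : ∀ x : X, ((Finset.univ.filter (fun a => g a x = M x)).image e).Nonempty := by
    intro x
    obtain ⟨a, _, ha⟩ := Finset.exists_mem_eq_sup' (Finset.univ_nonempty) (fun a => g a x)
    exact Finset.Nonempty.image ⟨a, Finset.mem_filter.2 ⟨Finset.mem_univ a, ha.symm⟩⟩ e
  set sel : X → A := fun x => e.symm (((Finset.univ.filter (fun a => g a x = M x)).image e).min' (hne x)) with hseldef
  have hchar : ∀ x a, sel x = a ↔ (g a x = M x ∧ ∀ b, g b x = M x → e a ≤ e b) := by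
    intro x a
    constructor
    · rintro rfl
      have hmem := Finset.min'_mem _ (hne x)
      obtain ⟨a', ha', hea'⟩ := Finset.mem_image.1 hmem
      have hsel : sel x = a' := (Equiv.symm_apply_eq e).2 hea'.symm
      constructor
      · rw [hsel]; exact (Finset.mem_filter.1 ha').2
      · intro b hb
        have : (e b : Fin (Fintype.card A)) ∈
            (Finset.univ.filter (fun a => g a x = M x)).image e :=
          Finset.mem_image_of_mem e (Finset.mem_filter.2 ⟨Finset.mem_univ b, hb⟩)
        have hle := Finset.min'_le _ _ this
        exact le_trans (le_of_eq (Equiv.apply_symm_apply e _)) hle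
    · rintro ⟨h1, h2⟩
      have hmem : (e a : Fin (Fintype.card A)) ∈
          (Finset.univ.filter (fun b => g b x = M x)).image e :=
        Finset.mem_image_of_mem e (Finset.mem_filter.2 ⟨Finset.mem_univ a, h1⟩)
      have hle1 := Finset.min'_le _ _ hmem
      have hle2 : e a ≤ ((Finset.univ.filter (fun b => g b x = M x)).image e).min' (hne x) := by
        obtain ⟨a', ha', hea'⟩ := Finset.mem_image.1 (Finset.min'_mem _ (hne x))
        rw [← hea']
        exact h2 a' (Finset.mem_filter.1 ha').2
      have : ((Finset.univ.filter (fun b => g b x = M x)).image e).min' (hne x) = e a :=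
        le_antisymm hle1 hle2
      exact (Equiv.symm_apply_eq e).2 this
  set π : X → A → ℝ := fun x a => if sel x = a then 1 else 0 with hπdef
  have hset : ∀ a, MeasurableSet {x | sel x = a} := by
    intro a
    have heq : {x | sel x = a}
        = {x | g a x = M x} ∩ ⋂ b, {x | g b x = M x → e a ≤ e b} := by
      ext x
      simp only [Set.mem_setOf_eq, Set.mem_inter_iff, Set.mem_iInter, hchar]
    rw [heq]
    refine (measurableSet_eq_fun (hgm a) hMm).inter (MeasurableSet.iInter fun b => ?_)
    by_cases hab : e a ≤ e b
    · have : {x | g b x = M x → e a ≤ e b} = Set.univ := by ext x; simp [hab]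
      rw [this]; exact MeasurableSet.univ
    · have : {x | g b x = M x → e a ≤ e b} = {x | g b x = M x}ᶜ := by
        ext x; simp [hab]
      rw [this]; exact (measurableSet_eq_fun (hgm b) hMm).compl
  have hpol : IsPolicy π := by
    refine ⟨fun x a => by rw [hπdef]; dsimp only; split <;> norm_num, fun x => ?_, fun a => ?_⟩
    · rw [hπdef]
      simp only
      rw [Finset.sum_ite_eq]
      simp
    · exact Measurable.ite (hset a) measurable_const measurable_const
  have hpt : ∀ x, ∑ a, g a x * π x a = M x := by
    intro x
    obtain ⟨hm1, -⟩ := (hchar x (sel x)).1 rfl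
    calc ∑ a, g a x * π x a = ∑ a, (if sel x = a then g a x else 0) := by
          refine Finset.sum_congr rfl fun a _ => ?_
          rw [hπdef]; dsimp only; split <;> simp
      _ = g (sel x) x := by rw [Finset.sum_ite_eq]; simp
      _ = M x := hm1
  refine ⟨π, hpol, ?_⟩
  have hL : L ν r c lam C = ∫ x, M x ∂ν := rfl
  rw [hL, ← lagrangian_eq ν hr hc hrm hcm lam C hpol]
  exact integral_congr_ae (Filter.Eventually.of_forall fun x => (hpt x).symm)


lemma polReward_nonneg (hr : ∀ x a, r x a ∈ Set.Icc (0:ℝ) 1) {π : X → A → ℝ}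
    (hπ : IsPolicy π) : 0 ≤ polReward ν r π :=
  integral_nonneg fun x => Finset.sum_nonneg fun a _ => mul_nonneg (hr x a).1 (hπ.1 x a)

lemma polReward_le_one (hr : ∀ x a, r x a ∈ Set.Icc (0:ℝ) 1)
    (hrm : ∀ a, Measurable fun x => r x a) {π : X → A → ℝ}
    (hπ : IsPolicy π) : polReward ν r π ≤ 1 := by
  have hrb : ∀ x a, |r x a| ≤ 1 := fun x a => abs_le.2 ⟨by linarith [(hr x a).1], (hr x a).2⟩
  have h := integral_mono (integrable_sum_mul ν hrm hrb zero_le_one hπ) (integrable_const 1)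
    (fun x => (abs_le.1 (sum_mul_abs_le hπ hrb zero_le_one x)).2)
  simpa [polReward] using h

lemma OPT_bddAbove (hr : ∀ x a, r x a ∈ Set.Icc (0:ℝ) 1)
    (hrm : ∀ a, Measurable fun x => r x a) (B'' : Fin d → ℝ) :
    BddAbove {y : ℝ | ∃ π, IsPolicy π ∧ (∀ i, polCost ν c π i ≤ B'' i) ∧ y = polReward ν r π} := by
  refine ⟨1, fun y hy => ?_⟩
  obtain ⟨π, hπ, -, rfl⟩ := hy
  exact polReward_le_one ν hr hrm hπ

lemma le_OPT (hr : ∀ x a, r x a ∈ Set.Icc (0:ℝ) 1)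
    (hrm : ∀ a, Measurable fun x => r x a) (B'' : Fin d → ℝ) {π : X → A → ℝ}
    (hπ : IsPolicy π) (hcost : ∀ i, polCost ν c π i ≤ B'' i) :
    polReward ν r π ≤ OPT ν r c B'' :=
  le_csSup (OPT_bddAbove ν hr hrm B'') ⟨π, hπ, hcost, rfl⟩

lemma exists_dual_le (hr : ∀ x a, r x a ∈ Set.Icc (0:ℝ) 1)
    (hc : ∀ x a i, c x a i ∈ Set.Icc (-1:ℝ) 1)
    (hrm : ∀ a, Measurable fun x => r x a) (hcm : ∀ a i, Measurable fun x => c x a i)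
    {C B' : Fin d → ℝ} (hB'C : ∀ i, B' i < C i)
    {π₀ : X → A → ℝ} (hπ₀ : IsPolicy π₀) (hπ₀c : ∀ i, polCost ν c π₀ i ≤ B' i)
    (hd : 0 < d) {ε : ℝ} (hε : 0 < ε) :
    ∃ lam : Fin d → ℝ, (∀ i, 0 ≤ lam i) ∧ L ν r c lam C ≤ OPT ν r c C + ε := by
  classical
  haveI : Nonempty (Fin d) := Fin.pos_iff_nonempty.mp hd
  have hrb : ∀ x a, |r x a| ≤ 1 := fun x a => abs_le.2 ⟨by linarith [(hr x a).1], (hr x a).2⟩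
  have hcb : ∀ i x a, |c x a i| ≤ 1 := fun i x a => abs_le.2 ⟨(hc x a i).1, (hc x a i).2⟩
  obtain ⟨i0, hi0⟩ := Finite.exists_min fun i => C i - B' i
  set m0 : ℝ := C i0 - B' i0 with hm0def
  have hm0 : 0 < m0 := sub_pos.2 (hB'C i0)
  -- the achievable set
  set S : Set (ℝ × (Fin d → ℝ)) := {p | ∃ π, IsPolicy π ∧ p.1 ≤ polReward ν r π ∧
    ∀ i, polCost ν c π i ≤ p.2 i} with hSdef
  have hconv : Convex ℝ S := by
    rintro ⟨y1, z1⟩ ⟨π₁, hπ₁, hy1, hz1⟩ ⟨y2, z2⟩ ⟨π₂, hπ₂, hy2, hz2⟩ s t hs ht hst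
    refine ⟨fun x a => s * π₁ x a + t * π₂ x a, hπ₁.mix hπ₂ hs ht hst, ?_, ?_⟩
    · have : polReward ν r (fun x a => s * π₁ x a + t * π₂ x a)
          = s * polReward ν r π₁ + t * polReward ν r π₂ :=
        integral_sum_mul_mix ν hrm hrb hπ₁ hπ₂ s t
      rw [this]
      have : (s • (y1, z1) + t • (y2, z2)).1 = s * y1 + t * y2 := rfl
      rw [this]
      exact add_le_add (mul_le_mul_of_nonneg_left hy1 hs) (mul_le_mul_of_nonneg_left hy2 ht)
    · intro i
      have : polCost ν c (fun x a => s * π₁ x a + t * π₂ x a) i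
          = s * polCost ν c π₁ i + t * polCost ν c π₂ i :=
        integral_sum_mul_mix ν (fun a => hcm a i) (hcb i) hπ₁ hπ₂ s t
      rw [this]
      have h2 : (s • (y1, z1) + t • (y2, z2)).2 i = s * z1 i + t * z2 i := rfl
      rw [h2]
      exact add_le_add (mul_le_mul_of_nonneg_left (hz1 i) hs)
        (mul_le_mul_of_nonneg_left (hz2 i) ht)
  set p : ℝ × (Fin d → ℝ) := (OPT ν r c C + ε, C) with hpdef
  have hpnc : p ∉ closure S := by
    intro hp
    set δ : ℝ := min (m0 / 2) (ε * m0 / (2 * (m0 + 1))) with hδdef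
    have hδ0 : 0 < δ := lt_min (by linarith) (by positivity)
    have hδm : δ < m0 := lt_of_le_of_lt (min_le_left _ _) (by linarith)
    obtain ⟨q, hqS, hdq⟩ := Metric.mem_closure_iff.1 hp δ hδ0
    obtain ⟨π, hπ, hy, hz⟩ := hqS
    have hy1 : |p.1 - q.1| < δ := by
      have h1 : dist p.1 q.1 ≤ dist p q := le_trans (le_max_left _ _) (le_of_eq (Prod.dist_eq).symm)
      calc |p.1 - q.1| = dist p.1 q.1 := (Real.dist_eq _ _).symm
        _ ≤ dist p q := h1
        _ < δ := hdq
    have hzi : ∀ i, |C i - q.2 i| < δ := by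
      intro i
      have h1 : dist (p.2 i) (q.2 i) ≤ dist p.2 q.2 := dist_le_pi_dist _ _ i
      have h2 : dist p.2 q.2 ≤ dist p q := le_trans (le_max_right _ _) (le_of_eq (Prod.dist_eq).symm)
      calc |C i - q.2 i| = dist (p.2 i) (q.2 i) := (Real.dist_eq _ _).symm
        _ ≤ dist p q := le_trans h1 h2
        _ < δ := hdq
    set t : ℝ := δ / m0 with htdef
    have ht0 : 0 < t := div_pos hδ0 hm0
    have ht1 : t < 1 := (div_lt_one hm0).2 hδm
    set πm : X → A → ℝ := fun x a => (1 - t) * π x a + t * π₀ x a with hπmdef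
    have hπm : IsPolicy πm := hπ.mix hπ₀ (by linarith) (by linarith) (by ring)
    have hcostm : ∀ i, polCost ν c πm i ≤ C i := by
      intro i
      have hmix : polCost ν c πm i = (1 - t) * polCost ν c π i + t * polCost ν c π₀ i :=
        integral_sum_mul_mix ν (fun a => hcm a i) (hcb i) hπ hπ₀ (1 - t) t
      have hcp : polCost ν c π i ≤ C i + δ := by
        have := hz i
        have := abs_lt.1 (hzi i)
        linarith
      have hcp0 : polCost ν c π₀ i ≤ C i - m0 := by
        have h1 := hπ₀c i
        have h2 := hi0 i
        linarith
      calc polCost ν c πm i = (1 - t) * polCost ν c π i + t * polCost ν c π₀ i := hmix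
        _ ≤ (1 - t) * (C i + δ) + t * (C i - m0) := by
            refine add_le_add (mul_le_mul_of_nonneg_left hcp (by linarith))
              (mul_le_mul_of_nonneg_left hcp0 (by linarith))
        _ = C i + (1 - t) * δ - t * m0 := by ring
        _ ≤ C i := by
            have htm : t * m0 = δ := by rw [htdef]; field_simp
            nlinarith
    have hrewm : polReward ν r πm ≥ q.1 - t := by
      have hmix : polReward ν r πm = (1 - t) * polReward ν r π + t * polReward ν r π₀ :=
        integral_sum_mul_mix ν hrm hrb hπ hπ₀ (1 - t) t
      have h1 : polReward ν r π ≤ 1 := polReward_le_one ν hr hrm hπ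
      have h0 : 0 ≤ polReward ν r π₀ := polReward_nonneg ν hr hπ₀
      have hq1 : q.1 ≤ polReward ν r π := hy
      nlinarith
    have hOPT : polReward ν r πm ≤ OPT ν r c C := le_OPT ν hr hrm C hπm hcostm
    have hq1 : OPT ν r c C + ε - δ < q.1 := by
      have := abs_lt.1 hy1
      have : p.1 - q.1 < δ := this.2
      simp only [hpdef] at this
      linarith
    have hδε : δ + t ≤ ε / 2 := by
      have htm : t * m0 = δ := div_mul_cancel₀ _ (ne_of_gt hm0)
      have h2' : δ * (2 * (m0 + 1)) ≤ ε * m0 :=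
        (le_div_iff₀ (by positivity)).1 (min_le_right _ _)
      nlinarith [htm, h2', hm0]
    linarith
  obtain ⟨f, u, hfu, hup⟩ :=
    geometric_hahn_banach_closed_point (hconv.closure) isClosed_closure hpnc
  have hfS : ∀ q ∈ S, f q < u := fun q hq => hfu q (subset_closure hq)
  set α : ℝ := f (1, 0) with hαdef
  set β : Fin d → ℝ := fun i => f (0, Pi.single i 1) with hβdef
  have hf : ∀ (y : ℝ) (z : Fin d → ℝ), f (y, z) = y * α + ∑ i, z i * β i := by
    intro y z
    have hyz : ((y, z) : ℝ × (Fin d → ℝ))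
        = y • ((1:ℝ), (0 : Fin d → ℝ)) + ∑ i, z i • ((0:ℝ), (Pi.single i 1 : Fin d → ℝ)) := by
      rw [Prod.ext_iff]
      constructor
      · simp [Prod.fst_sum]
      · simp only [Prod.snd_add, Prod.snd_sum, Prod.smul_snd, smul_zero, zero_add]
        have : ∀ i, z i • (Pi.single i 1 : Fin d → ℝ) = Pi.single i (z i) := by
          intro i
          funext j
          by_cases hji : j = i <;> simp [Pi.single_apply, hji]
        rw [Finset.sum_congr rfl fun i _ => this i, Finset.univ_sum_single]
    rw [hyz, map_add, f.map_smul, map_sum]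
    simp only [ContinuousLinearMap.map_smul, smul_eq_mul]
    rfl
  set R0 : ℝ := polReward ν r π₀ with hR0def
  set Z0 : Fin d → ℝ := polCost ν c π₀ with hZ0def
  have hq0 : ∀ s : ℝ, 0 ≤ s → ∀ w : Fin d → ℝ, (∀ i, 0 ≤ w i) →
      (R0 - s) * α + ∑ i, (Z0 i + w i) * β i < u := by
    intro s hs w hw
    have hmem : ((R0 - s, fun i => Z0 i + w i) : ℝ × (Fin d → ℝ)) ∈ S :=
      ⟨π₀, hπ₀, by simp [hR0def]; linarith, fun i => by simp [hZ0def]; linarith [hw i]⟩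
    have := hfS _ hmem
    rwa [hf] at this
  have hbase : R0 * α + ∑ j, Z0 j * β j < u := by
    have := hq0 0 le_rfl (fun _ => 0) (fun _ => le_rfl)
    simpa using this
  have hα : 0 ≤ α := by
    by_contra h
    push_neg at h
    set s : ℝ := (u - (R0 * α + ∑ j, Z0 j * β j)) / (-α) with hsdef
    have hspos : 0 < s := div_pos (by linarith) (by linarith)
    have hkey : (R0 - s) * α + ∑ j, Z0 j * β j < u := by
      have := hq0 s hspos.le (fun _ => 0) (fun _ => le_rfl)
      simpa using this
    have hsval : s * (-α) = u - (R0 * α + ∑ j, Z0 j * β j) :=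
      div_mul_cancel₀ _ (by linarith)
    have hexp : (R0 - s) * α + ∑ j, Z0 j * β j = u := by
      have e : (R0 - s) * α + ∑ j, Z0 j * β j
          = R0 * α + (∑ j, Z0 j * β j) + s * (-α) := by ring
      rw [e, hsval]; ring
    linarith
  have hβ : ∀ i, β i ≤ 0 := by
    intro i
    by_contra h
    push_neg at h
    set s : ℝ := (u - (R0 * α + ∑ j, Z0 j * β j)) / β i with hsdef
    have hspos : 0 < s := div_pos (by linarith) h
    have hkey : R0 * α + ∑ j, (Z0 j + if j = i then s else 0) * β j < u := by
      have := hq0 0 le_rfl (fun j => if j = i then s else 0)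
        (fun j => by by_cases hji : j = i <;> simp [hji, hspos.le])
      simpa using this
    have hsum : ∑ j, (Z0 j + if j = i then s else 0) * β j
        = (∑ j, Z0 j * β j) + s * β i := by
      have e : ∀ j : Fin d, (Z0 j + if j = i then s else 0) * β j
          = Z0 j * β j + (if j = i then s * β j else 0) := fun j => by split <;> ring
      rw [Finset.sum_congr rfl fun j _ => e j, Finset.sum_add_distrib,
        Finset.sum_ite_eq' Finset.univ i fun j => s * β j]
      simp
    have hsval : s * β i = u - (R0 * α + ∑ j, Z0 j * β j) :=
      div_mul_cancel₀ _ (ne_of_gt h)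
    rw [hsum] at hkey
    linarith
  have hαpos : 0 < α := by
    rcases lt_or_eq_of_le hα with h | h
    · exact h
    · exfalso
      have h2 : u < (OPT ν r c C + ε) * α + ∑ i, C i * β i := by
        have h2' := hup
        rw [hpdef, hf] at h2'
        exact h2'
      rw [← h] at hbase h2
      simp only [mul_zero, zero_add] at hbase h2
      have h3 : ∑ i, C i * β i ≤ ∑ i, Z0 i * β i := by
        refine Finset.sum_le_sum fun i _ => ?_
        have hCZ : Z0 i ≤ C i := le_trans (hπ₀c i) (hB'C i).le
        nlinarith [hβ i]
      linarith
  set lam : Fin d → ℝ := fun i => -β i / α with hlamdef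
  have hlam0 : ∀ i, 0 ≤ lam i := fun i => div_nonneg (neg_nonneg.2 (hβ i)) hαpos.le
  refine ⟨lam, hlam0, ?_⟩
  obtain ⟨πs, hπs, hLeq⟩ := exists_policy_L_eq ν hr hc hrm hcm lam C
  set R : ℝ := polReward ν r πs with hRdef
  set Z : Fin d → ℝ := polCost ν c πs with hZdef
  have hmem : ((R, Z) : ℝ × (Fin d → ℝ)) ∈ S := ⟨πs, hπs, le_rfl, fun i => le_rfl⟩
  have h1 : R * α + ∑ i, Z i * β i < u := by
    have := hfS _ hmem
    rwa [hf] at this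
  have h2 : u < (OPT ν r c C + ε) * α + ∑ i, C i * β i := by
    have := hup
    rw [hpdef, hf] at this
    exact this
  have h3 : (∑ i, (Z i - C i) * lam i) * α = ∑ i, C i * β i - ∑ i, Z i * β i := by
    rw [Finset.sum_mul, ← Finset.sum_sub_distrib]
    refine Finset.sum_congr rfl fun i _ => ?_
    rw [hlamdef]
    field_simp
    ring
  have h4 : (R - ∑ i, (Z i - C i) * lam i) * α < (OPT ν r c C + ε) * α := by
    have : (R - ∑ i, (Z i - C i) * lam i) * α
        = R * α - (∑ i, (Z i - C i) * lam i) * α := by ring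
    rw [this, h3]
    linarith
  have h5 : R - ∑ i, (Z i - C i) * lam i < OPT ν r c C + ε :=
    lt_of_mul_lt_mul_right (by linarith [h4]) hαpos.le
  rw [hLeq]
  exact h5.le


end Main

lemma enorm_le_sum (v : Fin d → ℝ) (hv : ∀ i, 0 ≤ v i) : enorm v ≤ ∑ i, v i := by
  rw [enorm, show ∑ i, v i = Real.sqrt ((∑ i, v i) ^ 2) from
    (Real.sqrt_sq (Finset.sum_nonneg fun i _ => hv i)).symm]
  apply Real.sqrt_le_sqrt
  calc ∑ i, v i ^ 2 ≤ ∑ i, v i * ∑ j, v j := by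
        refine Finset.sum_le_sum fun i _ => ?_
        rw [sq]
        exact mul_le_mul_of_nonneg_left
          (Finset.single_le_sum (fun j _ => hv j) (Finset.mem_univ i)) (hv i)
    _ = (∑ i, v i) ^ 2 := by rw [← Finset.sum_mul, sq]

/-- Lemma 3 of the paper: bound on the norm of the optimal dual variable.
If `0 ≤ b < min B`, `0 ≤ B̃ < B − b·1`, and the problem is feasible for some `B' < B̃`,
then any minimizer `λ*_{B−b·1}` of `λ ↦ L(λ, B−b·1)` over `λ ≥ 0` satisfies
`‖λ*_{B−b·1}‖ ≤ (OPT(r,c,B−b·1) − OPT(r,c,B̃)) / min(B − b·1 − B̃)`. -/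
theorem dual_norm_bound
    {X : Type*} [MeasurableSpace X] (ν : Measure X) [IsProbabilityMeasure ν]
    {A : Type*} [Fintype A] [Nonempty A] {d : ℕ} (hd : 0 < d)
    (r : X → A → ℝ) (c : X → A → Fin d → ℝ) (B : Fin d → ℝ) (b : ℝ) (Bt : Fin d → ℝ)
    (hr : ∀ x a, r x a ∈ Set.Icc (0 : ℝ) 1)
    (hc : ∀ x a i, c x a i ∈ Set.Icc (-1 : ℝ) 1)
    (hrm : ∀ a, Measurable fun x => r x a)
    (hcm : ∀ a i, Measurable fun x => c x a i)
    (hb0 : 0 ≤ b) (hb : b < minComp B)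
    (hBt0 : ∀ i, 0 ≤ Bt i) (hBt : ∀ i, Bt i < B i - b)
    (hfeas : ∃ B' : Fin d → ℝ, (∀ i, B' i < Bt i) ∧ Feasible ν c B')
    (lamstar : Fin d → ℝ) (hls0 : ∀ i, 0 ≤ lamstar i)
    (hmin : ∀ lam : Fin d → ℝ, (∀ i, 0 ≤ lam i) →
      L ν r c lamstar (fun i => B i - b) ≤ L ν r c lam (fun i => B i - b)) :
    enorm lamstar ≤
      (OPT ν r c (fun i => B i - b) - OPT ν r c Bt) / minComp (fun i => B i - b - Bt i) := by
  classical
  haveI : Nonempty (Fin d) := Fin.pos_iff_nonempty.mp hd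
  obtain ⟨B', hB'lt, π₀, hπ₀, hπ₀c⟩ := hfeas
  set C : Fin d → ℝ := fun i => B i - b with hC
  have hB'C : ∀ i, B' i < C i := fun i => (hB'lt i).trans (hBt i)
  have hm_le : ∀ i, minComp (fun i => C i - Bt i) ≤ C i - Bt i := fun i =>
    ciInf_le (Finite.bddBelow_range _) i
  have hm_pos : 0 < minComp (fun i => C i - Bt i) := by
    obtain ⟨i0, hi0⟩ := Finite.exists_min fun i => C i - Bt i
    exact lt_of_lt_of_le (sub_pos.2 (hBt i0)) (le_ciInf hi0)
  have hneBt : {y : ℝ | ∃ π, IsPolicy π ∧ (∀ i, polCost ν c π i ≤ Bt i)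
      ∧ y = polReward ν r π}.Nonempty :=
    ⟨polReward ν r π₀, π₀, hπ₀, fun i => (hπ₀c i).trans (hB'lt i).le, rfl⟩
  have key : ∀ ε : ℝ, 0 < ε → enorm lamstar * minComp (fun i => C i - Bt i)
      ≤ (OPT ν r c C - OPT ν r c Bt) + ε := by
    intro ε hε
    have hlt : OPT ν r c Bt - ε/2 < OPT ν r c Bt := by linarith
    obtain ⟨y, ⟨πt, hπt, hπtc, hyeq⟩, hygt⟩ := exists_lt_of_lt_csSup hneBt hlt
    obtain ⟨lam, hlam0, hlamle⟩ :=
      exists_dual_le ν hr hc hrm hcm hB'C hπ₀ hπ₀c hd (half_pos hε)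
    have hLstar_le : L ν r c lamstar C ≤ OPT ν r c C + ε/2 :=
      le_trans (hmin lam hlam0) hlamle
    have hLstar_ge : polReward ν r πt - ∑ i, (polCost ν c πt i - C i) * lamstar i
        ≤ L ν r c lamstar C := lagrangian_le_L ν hr hc hrm hcm lamstar C hπt
    have hsum : minComp (fun i => C i - Bt i) * (∑ i, lamstar i)
        ≤ ∑ i, (C i - polCost ν c πt i) * lamstar i := by
      rw [Finset.mul_sum]
      refine Finset.sum_le_sum fun i _ => ?_
      refine mul_le_mul_of_nonneg_right ?_ (hls0 i)
      have h1 := hπtc i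
      have h2 := hm_le i
      linarith
    have henorm := enorm_le_sum lamstar hls0
    have h5 : ∑ i, (C i - polCost ν c πt i) * lamstar i
        = - ∑ i, (polCost ν c πt i - C i) * lamstar i := by
      rw [← Finset.sum_neg_distrib]
      exact Finset.sum_congr rfl fun i _ => by ring
    have hy1 : OPT ν r c Bt - ε/2 < polReward ν r πt := hyeq ▸ hygt
    calc enorm lamstar * minComp (fun i => C i - Bt i)
        ≤ (∑ i, lamstar i) * minComp (fun i => C i - Bt i) :=
          mul_le_mul_of_nonneg_right henorm hm_pos.le
      _ = minComp (fun i => C i - Bt i) * ∑ i, lamstar i := mul_comm _ _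
      _ ≤ ∑ i, (C i - polCost ν c πt i) * lamstar i := hsum
      _ = - ∑ i, (polCost ν c πt i - C i) * lamstar i := h5
      _ ≤ L ν r c lamstar C - polReward ν r πt := by linarith
      _ ≤ (OPT ν r c C + ε/2) - (OPT ν r c Bt - ε/2) := by
          exact sub_le_sub hLstar_le hy1.le
      _ = (OPT ν r c C - OPT ν r c Bt) + ε := by ring
  have hfin : enorm lamstar * minComp (fun i => C i - Bt i)
      ≤ OPT ν r c C - OPT ν r c Bt := le_of_forall_pos_le_add key
  have hm_pos' : 0 < minComp (fun i => B i - b - Bt i) := hm_pos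
  rw [le_div_iff₀ hm_pos']
  exact hfin

end CBwK
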